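/- Let Ω be an invertible real m×m matrix with Ωᵀ = -Ω, and let J : ℝ → Matrix (Fin m) (Fin m) ℝ be a family of matrices such that (J t) * (J t) = -1 and the matrix Ω * (J t) is symmetric for every t ∈ ℝ. Suppose J is differentiable at t₀ with derivative A (HasDerivAt J A t₀). Then the matrix A * Ω⁻¹ is symmetric: (A * Ω⁻¹)ᵀ = A * Ω⁻¹. -/
import Mathlib


open Matrix

attribute [local instance] Matrix.normedAddCommGroup Matrix.normedSpace

/-- For a differentiable family of complex structures compatible with the symplectic
form `Ω` (i.e. `Ω * J t` symmetric), the bivector `A * Ω⁻¹` built from the derivative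
`A` of the family is symmetric. -/
theorem deriv_bivector_symm
    (m : ℕ) (Ω : Matrix (Fin m) (Fin m) ℝ)
    (hΩinv : IsUnit Ω) (hΩskew : Ωᵀ = -Ω)
    (J : ℝ → Matrix (Fin m) (Fin m) ℝ)
    (hJ2 : ∀ t : ℝ, J t * J t = -1)
    (hJΩ : ∀ t : ℝ, (Ω * J t)ᵀ = Ω * J t)
    (t₀ : ℝ) (A : Matrix (Fin m) (Fin m) ℝ) (hA : HasDerivAt J A t₀) :
    (A * Ω⁻¹)ᵀ = A * Ω⁻¹ := by
  -- the linear map X ↦ (Ω * X)ᵀ - Ω * X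
  let f : Matrix (Fin m) (Fin m) ℝ →ₗ[ℝ] Matrix (Fin m) (Fin m) ℝ :=
    { toFun := fun X => (Ω * X)ᵀ - Ω * X
      map_add' := fun X Y => by
        simp [Matrix.mul_add, Matrix.transpose_add]; abel
      map_smul' := fun c X => by
        simp [Matrix.mul_smul, Matrix.transpose_smul, smul_sub] }
  let L := f.toContinuousLinearMap
  have h1 : HasDerivAt (fun t => L (J t)) (L A) t₀ :=
    L.hasFDerivAt.comp_hasDerivAt t₀ hA
  have h2 : (fun t => L (J t)) = fun _ => (0 : Matrix (Fin m) (Fin m) ℝ) := by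
    funext t
    show (Ω * J t)ᵀ - Ω * J t = 0
    rw [hJΩ t, sub_self]
  rw [h2] at h1
  have hL : L A = 0 := h1.unique (hasDerivAt_const t₀ 0)
  have key : (Ω * A)ᵀ = Ω * A := by
    have : (Ω * A)ᵀ - Ω * A = 0 := hL
    linear_combination (norm := module) this
  -- now pure matrix algebra
  have hdet : IsUnit Ω.det := (Matrix.isUnit_iff_isUnit_det Ω).mp hΩinv
  have hΩΩ : Ω⁻¹ * Ω = 1 := Matrix.nonsing_inv_mul Ω hdet
  have hΩΩ' : Ω * Ω⁻¹ = 1 := Matrix.mul_nonsing_inv Ω hdet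
  have hAt : Aᵀ * Ω = -(Ω * A) := by
    have := key
    rw [Matrix.transpose_mul, hΩskew] at this
    calc Aᵀ * Ω = -(Aᵀ * (-Ω)) := by simp [mul_neg]
    _ = -(Ω * A) := by rw [this]
  have hneg : (-Ω)⁻¹ = -(Ω⁻¹) := by
    apply Matrix.inv_eq_right_inv
    simp [hΩΩ']
  have hinvT : (Ω⁻¹)ᵀ = -(Ω⁻¹) := by
    rw [Matrix.transpose_nonsing_inv, hΩskew, hneg]
  calc (A * Ω⁻¹)ᵀ = (Ω⁻¹)ᵀ * Aᵀ := Matrix.transpose_mul _ _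
    _ = -(Ω⁻¹ * Aᵀ) := by rw [hinvT, neg_mul]
    _ = -(Ω⁻¹ * (Aᵀ * Ω) * Ω⁻¹) := by rw [Matrix.mul_assoc (Ω⁻¹), Matrix.mul_assoc, hΩΩ', Matrix.mul_one]
    _ = Ω⁻¹ * (Ω * A) * Ω⁻¹ := by rw [hAt]; simp [mul_neg, neg_mul]
    _ = A * Ω⁻¹ := by rw [← Matrix.mul_assoc, hΩΩ, Matrix.one_mul]
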